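/- Let m ≥ 2 and let S' be the (2m+3)×(2m+3) nonnegative matrix with first column (1,0,0,1,1,...,1,0)ᵀ, columns 2 through 2m+2 forming the pattern (0-row then identity-like structure) as follows: row 1 = (1,0,...,0,m), row 2 = (0,1,0,...,0,m−1), row 3 = (0,0,1,0,...,0,m−1), rows 4 through 2m+2 have a 1 in column 1, a 1 in one distinct column among 4,...,2m+2, and last entry m−1, and last row = (0,1,0,1,0,...,0,m−2). Then every Hadamard square root of S' has rank at least 2m+3; in particular the minimum Hadamard square root rank of S' exceeds 2m+2. -/
import Mathlib


/-- The `(2m+3) × (2m+3)` submatrix `S'` of the slack matrix of the stable set polytope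
of an odd hole on `2m+1` vertices. -/
def oddHoleSlack (m : ℕ) : Matrix (Fin (2*m+3)) (Fin (2*m+3)) ℝ := fun i j =>
  if j.val = 0 then
    (if i.val = 0 ∨ (3 ≤ i.val ∧ i.val ≤ 2*m+1) then 1 else 0)
  else if j.val = 2*m+2 then
    (if i.val = 0 then (m : ℝ) else if i.val = 2*m+2 then (m : ℝ) - 2 else (m : ℝ) - 1)
  else if i.val = 2*m+2 then
    (if j.val = 1 ∨ j.val = 3 then 1 else 0)
  else if i.val = j.val then 1 else 0

/-- for `m ≥ 2`, every Hadamard square root of `oddHoleSlack m` has rank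
at least `2m+3`; in particular the minimum Hadamard square root rank exceeds `2m+2`. -/
theorem stmt19 (m : ℕ) (hm : 2 ≤ m)
    (N : Matrix (Fin (2*m+3)) (Fin (2*m+3)) ℝ)
    (hN : ∀ i j, N i j ^ 2 = oddHoleSlack m i j) :
    2*m+3 ≤ N.rank := by
  have h0lt : 0 < 2*m+3 := by omega
  have h1lt : 1 < 2*m+3 := by omega
  have h3lt : 3 < 2*m+3 := by omega
  have hLlt : 2*m+2 < 2*m+3 := by omega
  set j0 : Fin (2*m+3) := ⟨0, h0lt⟩ with hj0def
  set j1 : Fin (2*m+3) := ⟨1, h1lt⟩ with hj1def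
  set j3 : Fin (2*m+3) := ⟨3, h3lt⟩ with hj3def
  set jL : Fin (2*m+3) := ⟨2*m+2, hLlt⟩ with hjLdef
  have hj0v : j0.val = 0 := rfl
  have hj1v : j1.val = 1 := rfl
  have hj3v : j3.val = 3 := rfl
  have hjLv : jL.val = 2*m+2 := rfl
  -- zero entries of N
  have hzero : ∀ i j, oddHoleSlack m i j = 0 → N i j = 0 := by
    intro i j h
    have h2 := hN i j
    rw [h] at h2
    exact pow_eq_zero_iff (by norm_num : (2:ℕ) ≠ 0) |>.mp h2
  -- the key: kernel of mulVec is trivial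
  have key : ∀ c : Fin (2*m+3) → ℝ, N.mulVec c = 0 → c = 0 := by
    intro c hc
    have H : ∀ i, ∑ j, N i j * c j = 0 := by
      intro i
      have := congrFun hc i
      simpa [Matrix.mulVec, dotProduct] using this
    -- generic row equation for rows 1 ≤ i ≤ 2m+1
    have hrow : ∀ i : Fin (2*m+3), 1 ≤ i.val → i.val ≤ 2*m+1 →
        N i j0 * c j0 + N i i * c i + N i jL * c jL = 0 := by
      intro i h1 h2
      have hd1 : j0 ≠ i := Fin.ne_of_val_ne (by omega)
      have hd2 : j0 ≠ jL := Fin.ne_of_val_ne (by omega)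
      have hd3 : i ≠ jL := Fin.ne_of_val_ne (by omega)
      have hsub : ∑ j ∈ ({j0, i, jL} : Finset (Fin (2*m+3))), N i j * c j
          = ∑ j, N i j * c j := by
        apply Finset.sum_subset (Finset.subset_univ _)
        intro j _ hj
        simp only [Finset.mem_insert, Finset.mem_singleton] at hj
        push_neg at hj
        obtain ⟨hja, hjb, hjc⟩ := hj
        have hv0 : ¬ j.val = 0 := fun h => hja (Fin.ext (h.trans hj0v.symm))
        have hvL : ¬ j.val = 2*m+2 := fun h => hjc (Fin.ext (h.trans hjLv.symm))
        have hvi : ¬ i.val = j.val := fun h => hjb (Fin.ext h.symm)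
        have hz : oddHoleSlack m i j = 0 := by
          unfold oddHoleSlack
          split_ifs <;> first | rfl | (exfalso; first | omega | exact ‹False›.elim | (rcases ‹_ ∨ _› with h | h <;> first | exact h.elim | omega) | simp_all)
        rw [hzero i j hz, zero_mul]
      rw [H i] at hsub
      rw [← hsub, Finset.sum_insert (by simp [hd1, hd2]), Finset.sum_insert (by simp [hd3]),
        Finset.sum_singleton]
      ring
    -- row 0 equation
    have hrow0 : N j0 j0 * c j0 + N j0 jL * c jL = 0 := by
      have hd2 : j0 ≠ jL := Fin.ne_of_val_ne (by omega)
      have hsub : ∑ j ∈ ({j0, jL} : Finset (Fin (2*m+3))), N j0 j * c j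
          = ∑ j, N j0 j * c j := by
        apply Finset.sum_subset (Finset.subset_univ _)
        intro j _ hj
        simp only [Finset.mem_insert, Finset.mem_singleton] at hj
        push_neg at hj
        obtain ⟨hja, hjc⟩ := hj
        have hv0 : ¬ j.val = 0 := fun h => hja (Fin.ext (h.trans hj0v.symm))
        have hvL : ¬ j.val = 2*m+2 := fun h => hjc (Fin.ext (h.trans hjLv.symm))
        have hz : oddHoleSlack m j0 j = 0 := by
          unfold oddHoleSlack
          split_ifs <;> first | rfl | (exfalso; first | omega | exact ‹False›.elim | (rcases ‹_ ∨ _› with h | h <;> first | exact h.elim | omega) | simp_all)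
        rw [hzero j0 j hz, zero_mul]
      rw [H j0] at hsub
      rw [← hsub, Finset.sum_insert (by simp [hd2]), Finset.sum_singleton]
    -- last row equation
    have hrowL : N jL j1 * c j1 + N jL j3 * c j3 + N jL jL * c jL = 0 := by
      have hd1 : j1 ≠ j3 := Fin.ne_of_val_ne (by omega)
      have hd2 : j1 ≠ jL := Fin.ne_of_val_ne (by omega)
      have hd3 : j3 ≠ jL := Fin.ne_of_val_ne (by omega)
      have hsub : ∑ j ∈ ({j1, j3, jL} : Finset (Fin (2*m+3))), N jL j * c j
          = ∑ j, N jL j * c j := by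
        apply Finset.sum_subset (Finset.subset_univ _)
        intro j _ hj
        simp only [Finset.mem_insert, Finset.mem_singleton] at hj
        push_neg at hj
        obtain ⟨hja, hjb, hjc⟩ := hj
        have hv1 : ¬ j.val = 1 := fun h => hja (Fin.ext (h.trans hj1v.symm))
        have hv3 : ¬ j.val = 3 := fun h => hjb (Fin.ext (h.trans hj3v.symm))
        have hvL : ¬ j.val = 2*m+2 := fun h => hjc (Fin.ext (h.trans hjLv.symm))
        have hz : oddHoleSlack m jL j = 0 := by
          unfold oddHoleSlack
          split_ifs <;> first | rfl | (exfalso; first | omega | exact ‹False›.elim | (rcases ‹_ ∨ _› with h | h <;> first | exact h.elim | omega) | simp_all)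
        rw [hzero jL j hz, zero_mul]
      rw [H jL] at hsub
      rw [← hsub, Finset.sum_insert (by simp [hd1, hd2]), Finset.sum_insert (by simp [hd3]),
        Finset.sum_singleton]
      ring
    -- entry values
    have ha : (N j0 j0) ^ 2 = 1 := by
      rw [hN]; unfold oddHoleSlack
      split_ifs <;> first | rfl | (exfalso; first | omega | exact ‹False›.elim | (rcases ‹_ ∨ _› with h | h <;> first | exact h.elim | omega) | simp_all)
    have hb : (N j0 jL) ^ 2 = (m : ℝ) := by
      rw [hN]; unfold oddHoleSlack
      split_ifs <;> first | rfl | (exfalso; first | omega | exact ‹False›.elim | (rcases ‹_ ∨ _› with h | h <;> first | exact h.elim | omega) | simp_all)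
    have hvii : ∀ i : Fin (2*m+3), 1 ≤ i.val → i.val ≤ 2*m+1 → (N i i) ^ 2 = 1 := by
      intro i h1 h2
      rw [hN]; unfold oddHoleSlack
      split_ifs <;> first | rfl | (exfalso; first | omega | exact ‹False›.elim | (rcases ‹_ ∨ _› with h | h <;> first | exact h.elim | omega) | simp_all)
    have hviL : ∀ i : Fin (2*m+3), 1 ≤ i.val → i.val ≤ 2*m+1 → (N i jL) ^ 2 = (m : ℝ) - 1 := by
      intro i h1 h2
      rw [hN]; unfold oddHoleSlack
      split_ifs <;> first | rfl | (exfalso; first | omega | exact ‹False›.elim | (rcases ‹_ ∨ _› with h | h <;> first | exact h.elim | omega) | simp_all)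
    have h10 : N j1 j0 = 0 := by
      apply hzero
      unfold oddHoleSlack
      split_ifs <;> first | rfl | (exfalso; first | omega | exact ‹False›.elim | (rcases ‹_ ∨ _› with h | h <;> first | exact h.elim | omega) | simp_all)
    have hr0 : (N j3 j0) ^ 2 = 1 := by
      rw [hN]; unfold oddHoleSlack
      split_ifs <;> first | rfl | (exfalso; first | omega | exact ‹False›.elim | (rcases ‹_ ∨ _› with h | h <;> first | exact h.elim | omega) | simp_all)
    have hw1 : (N jL j1) ^ 2 = 1 := by
      rw [hN]; unfold oddHoleSlack
      split_ifs <;> first | rfl | (exfalso; first | omega | exact ‹False›.elim | (rcases ‹_ ∨ _› with h | h <;> first | exact h.elim | omega) | simp_all)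
    have hw3 : (N jL j3) ^ 2 = 1 := by
      rw [hN]; unfold oddHoleSlack
      split_ifs <;> first | rfl | (exfalso; first | omega | exact ‹False›.elim | (rcases ‹_ ∨ _› with h | h <;> first | exact h.elim | omega) | simp_all)
    have hwL : (N jL jL) ^ 2 = (m : ℝ) - 2 := by
      rw [hN]; unfold oddHoleSlack
      split_ifs <;> first | rfl | (exfalso; first | omega | exact ‹False›.elim | (rcases ‹_ ∨ _› with h | h <;> first | exact h.elim | omega) | simp_all)
    have hp : (N j1 j1) ^ 2 = 1 := hvii j1 (by omega) (by omega)
    have hq : (N j1 jL) ^ 2 = (m : ℝ) - 1 := hviL j1 (by omega) (by omega)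
    have hr3 : (N j3 j3) ^ 2 = 1 := hvii j3 (by omega) (by omega)
    have hrL : (N j3 jL) ^ 2 = (m : ℝ) - 1 := hviL j3 (by omega) (by omega)
    -- name the relevant quantities
    set a := N j0 j0
    set b := N j0 jL
    set p := N j1 j1
    set q := N j1 jL
    set r0 := N j3 j0
    set r3 := N j3 j3
    set rL := N j3 jL
    set w1 := N jL j1
    set w3 := N jL j3
    set wL := N jL jL
    set c0 := c j0
    set c1 := c j1
    set c3 := c j3
    set t := c jL
    set M : ℝ := (m : ℝ) with hM
    have E0 : a * c0 + b * t = 0 := hrow0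
    have E1 : p * c1 + q * t = 0 := by
      have h' := hrow j1 (by omega) (by omega)
      rw [h10] at h'
      linarith [h']
    have E3 : r0 * c0 + r3 * c3 + rL * t = 0 := hrow j3 (by omega) (by omega)
    have EL : w1 * c1 + w3 * c3 + wL * t = 0 := hrowL
    -- the algebraic contradiction
    have h1 : c0 ^ 2 = M * t ^ 2 := by
      linear_combination (a * c0 - b * t) * E0 - c0 ^ 2 * ha + t ^ 2 * hb
    have h2 : c1 ^ 2 = (M - 1) * t ^ 2 := by
      linear_combination (p * c1 - q * t) * E1 - c1 ^ 2 * hp + t ^ 2 * hq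
    have h3 : c3 ^ 2 = (2 * M - 1) * t ^ 2 + 2 * (r0 * rL * c0 * t) := by
      linear_combination (r3 * c3 - r0 * c0 - rL * t) * E3 - c3 ^ 2 * hr3 + c0 ^ 2 * hr0
        + t ^ 2 * hrL + h1
    have hs2 : (r0 * rL * c0 * t) ^ 2 = M * (M - 1) * t ^ 4 := by
      linear_combination rL ^ 2 * c0 ^ 2 * t ^ 2 * hr0 + c0 ^ 2 * t ^ 2 * hrL
        + (M - 1) * t ^ 2 * h1
    have h4 : w1 * w3 * c1 * c3 = -(M * t ^ 2) - r0 * rL * c0 * t := by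
      linear_combination ((w1 * c1 + w3 * c3 - wL * t) * EL - c1 ^ 2 * hw1 - c3 ^ 2 * hw3
        + t ^ 2 * hwL - h2 - h3) / 2
    have h5 : (M * t ^ 2 + r0 * rL * c0 * t) ^ 2 = c1 ^ 2 * c3 ^ 2 := by
      linear_combination (-(w1 * w3 * c1 * c3 - M * t ^ 2 - r0 * rL * c0 * t)) * h4
        + w3 ^ 2 * c1 ^ 2 * c3 ^ 2 * hw1 + c1 ^ 2 * c3 ^ 2 * hw3
    have h7 : 2 * (r0 * rL * c0 * t) * t ^ 2 = (1 - 2 * M) * t ^ 4 := by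
      linear_combination h5 + c3 ^ 2 * h2 + (M - 1) * t ^ 2 * h3 - hs2
    have h8 : t ^ 8 = 0 := by
      linear_combination (-(2 * (r0 * rL * c0 * t) * t ^ 2 + (1 - 2 * M) * t ^ 4)) * h7
        + 4 * t ^ 4 * hs2
    have ht : t = 0 := pow_eq_zero_iff (by norm_num : (8:ℕ) ≠ 0) |>.mp h8
    have hane : a ≠ 0 := by
      intro h
      rw [h] at ha
      norm_num at ha
    have hc0 : c0 = 0 := by
      have hmul : a * c0 = 0 := by rw [ht] at E0; linarith
      rcases mul_eq_zero.mp hmul with h | h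
      · exact absurd h hane
      · exact h
    -- all coordinates vanish
    funext j
    show c j = 0
    by_cases hja : j.val = 0
    · have : j = j0 := Fin.ext hja
      rw [this]; exact hc0
    by_cases hjb : j.val = 2*m+2
    · have : j = jL := Fin.ext hjb
      rw [this]; exact ht
    have hge : 1 ≤ j.val := by omega
    have hle : j.val ≤ 2*m+1 := by
      have := j.isLt
      omega
    have hrj := hrow j hge hle
    rw [hc0, ht] at hrj
    have hjj := hvii j hge hle
    have hjne : N j j ≠ 0 := by
      intro h
      rw [h] at hjj
      norm_num at hjj
    have hmul : N j j * c j = 0 := by linarith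
    rcases mul_eq_zero.mp hmul with h | h
    · exact absurd h hjne
    · exact h
  -- conclude about the rank
  have hinj : Function.Injective N.mulVecLin := by
    rw [← LinearMap.ker_eq_bot]
    exact LinearMap.ker_eq_bot'.mpr fun cvec hcvec => key cvec hcvec
  have hfr := LinearMap.finrank_range_of_inj hinj
  rw [Matrix.rank, hfr]
  simp
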